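/- For the second-order Winfree model with inertia, suppose $\sup_{t\in[0,T]}\mathcal{D}(\Theta_t) \le D$ and let $m_0 = \max\{\mathcal{D}(\Omega_0), (\mathcal{D}(\nu)+2\kappa D)/\gamma\}$. Then for all $i,j$ and $t\in(0,T)$: $|\frac{d}{dt}(\omega^{ij}_t + \gamma\theta^{ij}_t)| \le \mathcal{D}(\nu) + \frac{4\kappa}{\gamma}m_0 + 3\kappa D^2 + 2\kappa D$. -/

import Mathlib

open Real

/-- Diameter of a vector in `ℝ^N`: `𝒟(x) = max_{i,j} |x^i - x^j|`. -/
noncomputable def vdiam {N : ℕ} (x : Fin N → ℝ) : ℝ := ⨆ i, ⨆ j, |x i - x j|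

lemma abs_le_vdiam {N : ℕ} (x : Fin N → ℝ) (i j : Fin N) : |x i - x j| ≤ vdiam x := by
  haveI : Nonempty (Fin N) := ⟨i⟩
  calc |x i - x j| ≤ ⨆ j, |x i - x j| :=
      le_ciSup (f := fun j => |x i - x j|) (Set.Finite.bddAbove (Set.finite_range _)) j
    _ ≤ vdiam x := le_ciSup (f := fun i => ⨆ j, |x i - x j|)
        (Set.Finite.bddAbove (Set.finite_range _)) i

lemma vdiam_nonneg {N : ℕ} (hN : 0 < N) (x : Fin N → ℝ) : 0 ≤ vdiam x := by
  have := abs_le_vdiam x ⟨0, hN⟩ ⟨0, hN⟩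
  simpa using this

/-- Absolute bound on the derivative of `ω^{ij} + γθ^{ij}` for the
second-order Winfree model with inertia, under the a priori phase-diameter
bound `𝒟(Θ_t) ≤ D` on `[0,T]`, with `m₀ = max{𝒟(Ω₀), (𝒟(ν)+2κD)/γ}`. -/
theorem stmt8 (N : ℕ) (hN : 0 < N) (θ ω : Fin N → ℝ → ℝ) (ν : Fin N → ℝ)
    (γ κ : ℝ) (hγ : 0 < γ) (hκ : 0 ≤ κ)
    (hθ : ∀ i, ∀ t : ℝ, HasDerivAt (θ i) (ω i t) t)
    (hω : ∀ i, ∀ t : ℝ, HasDerivAt (ω i)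
      (-γ * ω i t + ν i - κ / N * Real.sin (θ i t) * ∑ j, (1 + Real.cos (θ j t))) t)
    (T D : ℝ) (hT : 0 < T) (hD : 0 < D)
    (hsup : ∀ t ∈ Set.Icc (0:ℝ) T, vdiam (fun i => θ i t) ≤ D)
    (m₀ : ℝ) (hm₀ : m₀ = max (vdiam (fun i => ω i 0)) ((vdiam ν + 2 * κ * D) / γ)) :
    ∀ i j, ∀ t ∈ Set.Ioo (0:ℝ) T, ∃ d : ℝ,
      HasDerivAt (fun s => (ω i s - ω j s) + γ * (θ i s - θ j s)) d t ∧
      |d| ≤ vdiam ν + 4 * κ / γ * m₀ + 3 * κ * D ^ 2 + 2 * κ * D := by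
  intro i j t ht
  set S : ℝ := ∑ k, (1 + Real.cos (θ k t)) with hS
  refine ⟨(ν i - ν j) - κ / N * (Real.sin (θ i t) - Real.sin (θ j t)) * S, ?_, ?_⟩
  · have hd : HasDerivAt (fun s => (ω i s - ω j s) + γ * (θ i s - θ j s))
        ((-γ * ω i t + ν i - κ / N * Real.sin (θ i t) * S)
          - (-γ * ω j t + ν j - κ / N * Real.sin (θ j t) * S)
          + γ * (ω i t - ω j t)) t :=
      (((hω i t).sub (hω j t)).add (((hθ i t).sub (hθ j t)).const_mul γ))
    convert hd using 1
    ring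
  · -- bound
    have hNpos : (0:ℝ) < N := by exact_mod_cast hN
    have hν : |ν i - ν j| ≤ vdiam ν := abs_le_vdiam ν i j
    have hsin : |Real.sin (θ i t) - Real.sin (θ j t)| ≤ D := by
      have h1 : |Real.sin (θ i t) - Real.sin (θ j t)| ≤ |θ i t - θ j t| := by
        rw [Real.sin_sub_sin]
        calc |2 * Real.sin ((θ i t - θ j t) / 2) * Real.cos ((θ i t + θ j t) / 2)|
            ≤ 2 * |(θ i t - θ j t) / 2| * 1 := by
              rw [abs_mul, abs_mul]
              have h := Real.abs_sin_le_abs (x := (θ i t - θ j t) / 2)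
              have h2 := Real.abs_cos_le_one ((θ i t + θ j t) / 2)
              have : |(2:ℝ)| = 2 := by norm_num
              rw [this]
              apply mul_le_mul _ h2 (abs_nonneg _) (by positivity)
              nlinarith [abs_nonneg ((θ i t - θ j t) / 2)]
          _ = |θ i t - θ j t| := by rw [abs_div, abs_two]; ring
      have h2 : |θ i t - θ j t| ≤ vdiam (fun k => θ k t) :=
        abs_le_vdiam (fun k => θ k t) i j
      have h3 := hsup t ⟨le_of_lt ht.1, le_of_lt ht.2⟩
      linarith
    have hSb : |S| ≤ 2 * N := by
      rw [hS]
      calc |∑ k, (1 + Real.cos (θ k t))| ≤ ∑ k : Fin N, |1 + Real.cos (θ k t)| :=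
            Finset.abs_sum_le_sum_abs _ _
        _ ≤ ∑ _k : Fin N, (2:ℝ) := by
            refine Finset.sum_le_sum fun k _ => ?_
            have := Real.neg_one_le_cos (θ k t)
            have := Real.cos_le_one (θ k t)
            rw [abs_le]; constructor <;> linarith
        _ = 2 * N := by simp [mul_comm]
    have hmain : |(ν i - ν j) - κ / N * (Real.sin (θ i t) - Real.sin (θ j t)) * S|
        ≤ vdiam ν + 2 * κ * D := by
      have habs : |κ / N * (Real.sin (θ i t) - Real.sin (θ j t)) * S| ≤ 2 * κ * D := by
        rw [abs_mul, abs_mul]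
        have hκN : |κ / N| = κ / N := abs_of_nonneg (by positivity)
        rw [hκN]
        calc κ / N * |Real.sin (θ i t) - Real.sin (θ j t)| * |S|
            ≤ κ / N * D * (2 * N) := by
              apply mul_le_mul _ hSb (abs_nonneg _) (by positivity)
              exact mul_le_mul_of_nonneg_left hsin (by positivity)
          _ = 2 * κ * D := by field_simp
      calc |(ν i - ν j) - κ / N * (Real.sin (θ i t) - Real.sin (θ j t)) * S|
          ≤ |ν i - ν j| + |κ / N * (Real.sin (θ i t) - Real.sin (θ j t)) * S| :=
            abs_sub _ _
        _ ≤ vdiam ν + 2 * κ * D := add_le_add hν habs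
    have hm₀nn : 0 ≤ m₀ := by
      rw [hm₀]
      exact le_trans (vdiam_nonneg hN _) (le_max_left _ _)
    have h1 : 0 ≤ 4 * κ / γ * m₀ := by positivity
    have h2 : 0 ≤ 3 * κ * D ^ 2 := by positivity
    linarith
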